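/- Let A ∈ SL(2,ℤ) be symmetric and hyperbolic with eigenvalues λ, λ^{-1}, |λ| > 1. Then min over nonzero k ∈ ℤ² of Σ_{l=-n}^{n} |A^l k|² equals Σ_{l=-n}^{n} |λ|^{2l}, where |·| is the Euclidean norm. -/

import Mathlib

/-- Eigenvector equation for integer powers. -/
lemma aux_zpow_eig (M : Matrix (Fin 2) (Fin 2) ℝ) (hu : IsUnit M.det) (t : ℝ) (ht : t ≠ 0)
    (v : Fin 2 → ℝ) (hv : M.mulVec v = t • v) (l : ℤ) :
    (M ^ l).mulVec v = t ^ l • v := by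
  have hinv : M⁻¹.mulVec v = t⁻¹ • v := by
    have h1 : M⁻¹.mulVec (M.mulVec v) = v := by
      rw [Matrix.mulVec_mulVec, Matrix.nonsing_inv_mul _ hu, Matrix.one_mulVec]
    rw [hv, Matrix.mulVec_smul] at h1
    calc M⁻¹.mulVec v = t⁻¹ • (t • M⁻¹.mulVec v) := by
          rw [smul_smul, inv_mul_cancel₀ ht, one_smul]
      _ = t⁻¹ • v := by rw [h1]
  induction l using Int.induction_on with
  | zero => simp
  | succ i ih =>
    rw [Matrix.zpow_add_one hu, ← Matrix.mulVec_mulVec, hv, Matrix.mulVec_smul, ih, smul_smul,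
      zpow_add_one₀ ht]
    ring_nf
  | pred i ih =>
    have h2 : M ^ (-(i : ℤ) - 1) = M⁻¹ * M ^ (-(i : ℤ)) := by
      rw [← Matrix.zpow_neg_one, ← Matrix.zpow_add hu]
      ring_nf
    rw [h2, ← Matrix.mulVec_mulVec, ih, Matrix.mulVec_smul, hinv, smul_smul]
    congr 1
    rw [show -(i : ℤ) - 1 = -(i : ℤ) + (-1) by ring, zpow_add₀ ht]
    simp

set_option maxHeartbeats 1000000 in
/-- for a symmetric hyperbolic `A ∈ SL(2,ℤ)` with eigenvalue `λ`, `|λ| > 1`,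
the minimum over nonzero integer vectors of `Σ_{l=-n}^{n} |Aˡ k|²` equals
`Σ_{l=-n}^{n} |λ|^{2l}`.  Here `B : ℤ → Matrix` encodes the (integer) powers `Aˡ`. -/
theorem arithmetic_min_symmetric_cat_map
    (A : Matrix (Fin 2) (Fin 2) ℤ) (hdet : A.det = 1) (hsymm : A.IsSymm)
    (htr : 2 < |Matrix.trace A|)
    (B : ℤ → Matrix (Fin 2) (Fin 2) ℝ)
    (hB0 : B 0 = 1)
    (hBrec : ∀ l : ℤ, B (l + 1) = A.map (Int.cast : ℤ → ℝ) * B l)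
    (lam : ℝ) (hlam : 1 < |lam|)
    (heig : ∃ v : Fin 2 → ℝ, v ≠ 0 ∧ (A.map (Int.cast : ℤ → ℝ)).mulVec v = lam • v)
    (n : ℕ) :
    sInf {s : ℝ | ∃ k : Fin 2 → ℤ, k ≠ 0 ∧
        s = ∑ l ∈ Finset.Icc (-(n : ℤ)) (n : ℤ),
              ∑ i, ((B l).mulVec (fun j => ((k j : ℤ) : ℝ)) i) ^ 2} =
      ∑ l ∈ Finset.Icc (-(n : ℤ)) (n : ℤ), |lam| ^ (2 * l) := by
  classical
  obtain ⟨v, hv0, hv⟩ := heig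
  set Ar : Matrix (Fin 2) (Fin 2) ℝ := A.map (Int.cast : ℤ → ℝ) with hArdef
  have hlam0 : lam ≠ 0 := by
    intro h; rw [h] at hlam; simp at hlam; linarith
  -- entries
  have hb : (A 1 0 : ℝ) = (A 0 1 : ℝ) := by
    have := congrFun (congrFun hsymm 1) 0
    simp [Matrix.transpose_apply] at this
    exact_mod_cast this.symm
  have hdetR : (A 0 0 : ℝ) * (A 1 1 : ℝ) - (A 0 1 : ℝ) * (A 1 0 : ℝ) = 1 := by
    rw [Matrix.det_fin_two] at hdet; exact_mod_cast hdet
  have hArdet : Ar.det = 1 := by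
    rw [Matrix.det_fin_two]
    simpa [hArdef, Matrix.map_apply] using hdetR
  have hu : IsUnit Ar.det := by rw [hArdet]; exact isUnit_one
  have hArsymm : Ar.IsSymm := by
    unfold Matrix.IsSymm at hsymm ⊢
    rw [hArdef, ← Matrix.transpose_map, hsymm]
  -- eigen equations componentwise
  have he0 : (A 0 0 : ℝ) * v 0 + (A 0 1 : ℝ) * v 1 = lam * v 0 := by
    have := congrFun hv 0
    simpa [Matrix.mulVec, dotProduct, Fin.sum_univ_two, hArdef, Matrix.map_apply] using this
  have he1 : (A 0 1 : ℝ) * v 0 + (A 1 1 : ℝ) * v 1 = lam * v 1 := by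
    have h := congrFun hv 1
    simp [Matrix.mulVec, dotProduct, Fin.sum_univ_two, hArdef, Matrix.map_apply] at h
    linear_combination h - v 0 * hb
  -- characteristic equation
  have hchar : lam ^ 2 - ((A 0 0 : ℝ) + (A 1 1 : ℝ)) * lam + 1 = 0 := by
    have hker : (Ar - lam • 1).mulVec v = 0 := by
      rw [Matrix.sub_mulVec, hv, Matrix.smul_mulVec, Matrix.one_mulVec, sub_self]
    have hdet0 : (Ar - lam • 1).det = 0 := by
      rw [← Matrix.exists_mulVec_eq_zero_iff]
      exact ⟨v, hv0, hker⟩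
    rw [Matrix.det_fin_two] at hdet0
    simp only [Matrix.sub_apply, Matrix.smul_apply, Matrix.one_apply, hArdef,
      Matrix.map_apply] at hdet0
    norm_num at hdet0
    nlinarith [hdet0, hdetR, hb]
  set mu : ℝ := (A 0 0 : ℝ) + (A 1 1 : ℝ) - lam with hmudef
  have hlammu : lam * mu = 1 := by rw [hmudef]; nlinarith [hchar]
  have hmu0 : mu ≠ 0 := by intro h; rw [h] at hlammu; simp at hlammu
  have hmuinv : mu = lam⁻¹ := by field_simp; linarith [hlammu]
  -- second eigenvector
  set w : Fin 2 → ℝ := ![-v 1, v 0] with hwdef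
  have hw : Ar.mulVec w = mu • w := by
    funext i
    fin_cases i <;>
      simp [Matrix.mulVec, dotProduct, Fin.sum_univ_two, hArdef, Matrix.map_apply,
        hwdef, hmudef, hb] <;> nlinarith [he0, he1]
  -- B l = Ar ^ l
  have hBl : ∀ l : ℤ, B l = Ar ^ l := by
    intro l
    induction l using Int.induction_on with
    | zero => simpa using hB0
    | succ i ih =>
      rw [hBrec, ih, Matrix.zpow_add_one hu]
      exact (Matrix.Commute.self_zpow Ar i)
    | pred i ih =>
      have h := hBrec (-(i : ℤ) - 1)
      rw [show (-(i : ℤ) - 1 + 1) = -(i : ℤ) by ring, ih] at h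
      have h2 : Ar⁻¹ * (Ar * B (-(i : ℤ) - 1)) = B (-(i : ℤ) - 1) := by
        rw [← mul_assoc, Matrix.nonsing_inv_mul _ hu, one_mul]
      rw [← h2, ← h, ← Matrix.zpow_neg_one, ← Matrix.zpow_add hu]
      ring_nf
  -- eigen equations for powers
  have heigv : ∀ l : ℤ, (Ar ^ l).mulVec v = lam ^ l • v :=
    fun l => aux_zpow_eig Ar hu lam hlam0 v hv l
  have heigw : ∀ l : ℤ, (Ar ^ l).mulVec w = mu ^ l • w :=
    fun l => aux_zpow_eig Ar hu mu hmu0 w hw l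
  -- dot products with symmetric powers
  have hdotgen : ∀ (l : ℤ) (x u : Fin 2 → ℝ) (t : ℝ), (Ar ^ l).mulVec u = t • u →
      dotProduct ((Ar ^ l).mulVec x) u = t * dotProduct x u := by
    intro l x u t hequ
    have hsym := hArsymm.zpow l
    have hvm : Matrix.vecMul u (Ar ^ l) = (Ar ^ l).mulVec u := by
      have h := Matrix.vecMul_transpose (Ar ^ l) u
      rw [hsym] at h
      exact h
    calc dotProduct ((Ar ^ l).mulVec x) u
        = dotProduct u ((Ar ^ l).mulVec x) := dotProduct_comm _ _
      _ = dotProduct (Matrix.vecMul u (Ar ^ l)) x := Matrix.dotProduct_mulVec _ _ _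
      _ = dotProduct (t • u) x := by rw [hvm, hequ]
      _ = t * dotProduct u x := by rw [smul_dotProduct, smul_eq_mul]
      _ = t * dotProduct x u := by rw [dotProduct_comm]
  -- squares of zpow
  have h2l : ∀ (t : ℝ), t ≠ 0 → ∀ l : ℤ, (t ^ l) ^ 2 = t ^ (2 * l) := by
    intro t ht l
    rw [sq, ← zpow_add₀ ht]
    ring_nf
  -- Lagrange identity
  have lagrange : ∀ y : Fin 2 → ℝ,
      (∑ i, (y i) ^ 2) * dotProduct v v
        = (dotProduct y v) ^ 2 + (dotProduct y w) ^ 2 := by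
    intro y
    simp [dotProduct, Fin.sum_univ_two, hwdef]
    ring
  -- per-l identity
  have key : ∀ (x : Fin 2 → ℝ) (l : ℤ),
      (∑ i, ((Ar ^ l).mulVec x i) ^ 2) * dotProduct v v
        = lam ^ (2 * l) * (dotProduct x v) ^ 2
          + mu ^ (2 * l) * (dotProduct x w) ^ 2 := by
    intro x l
    rw [lagrange ((Ar ^ l).mulVec x), hdotgen l x v (lam ^ l) (heigv l),
      hdotgen l x w (mu ^ l) (heigw l), mul_pow, mul_pow, h2l lam hlam0 l, h2l mu hmu0 l]
  -- sums
  have hmusum : ∑ l ∈ Finset.Icc (-(n : ℤ)) (n : ℤ), mu ^ (2 * l)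
      = ∑ l ∈ Finset.Icc (-(n : ℤ)) (n : ℤ), lam ^ (2 * l) := by
    refine Finset.sum_equiv (Equiv.neg ℤ) ?_ ?_
    · intro i; simp [Finset.mem_Icc]; omega
    · intro i _
      rw [hmuinv, Equiv.neg_apply, show 2 * (-i) = -(2 * i) by ring, zpow_neg, inv_zpow]
  have hnv : 0 < dotProduct v v := by
    have hv01 : v 0 ≠ 0 ∨ v 1 ≠ 0 := by
      by_contra h
      push_neg at h
      apply hv0
      funext i
      fin_cases i <;> simp [h.1, h.2]
    have hvv : dotProduct v v = v 0 * v 0 + v 1 * v 1 := by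
      simp [dotProduct, Fin.sum_univ_two]
    rw [hvv]
    rcases hv01 with h | h <;>
      nlinarith [mul_self_nonneg (v 0), mul_self_nonneg (v 1), mul_self_pos.mpr h]
  have hS : 0 < ∑ l ∈ Finset.Icc (-(n : ℤ)) (n : ℤ), lam ^ (2 * l) := by
    refine Finset.sum_pos (fun l _ => ?_) ⟨0, by simp⟩
    rw [← h2l lam hlam0 l]
    exact sq_pos_of_ne_zero (zpow_ne_zero _ hlam0)
  -- main formula
  have hfinal : ∀ x : Fin 2 → ℝ,
      (∑ l ∈ Finset.Icc (-(n : ℤ)) (n : ℤ), ∑ i, ((Ar ^ l).mulVec x i) ^ 2)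
        = dotProduct x x * ∑ l ∈ Finset.Icc (-(n : ℤ)) (n : ℤ), lam ^ (2 * l) := by
    intro x
    have hmulnv :
        (∑ l ∈ Finset.Icc (-(n : ℤ)) (n : ℤ), ∑ i, ((Ar ^ l).mulVec x i) ^ 2)
            * dotProduct v v
          = (dotProduct x x
              * ∑ l ∈ Finset.Icc (-(n : ℤ)) (n : ℤ), lam ^ (2 * l)) * dotProduct v v := by
      rw [Finset.sum_mul]
      calc ∑ l ∈ Finset.Icc (-(n : ℤ)) (n : ℤ),
              (∑ i, ((Ar ^ l).mulVec x i) ^ 2) * dotProduct v v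
          = ∑ l ∈ Finset.Icc (-(n : ℤ)) (n : ℤ),
              (lam ^ (2 * l) * (dotProduct x v) ^ 2
                + mu ^ (2 * l) * (dotProduct x w) ^ 2) :=
            Finset.sum_congr rfl fun l _ => key x l
        _ = (∑ l ∈ Finset.Icc (-(n : ℤ)) (n : ℤ), lam ^ (2 * l))
              * (dotProduct x v) ^ 2
            + (∑ l ∈ Finset.Icc (-(n : ℤ)) (n : ℤ), mu ^ (2 * l))
              * (dotProduct x w) ^ 2 := by
            rw [Finset.sum_add_distrib, ← Finset.sum_mul, ← Finset.sum_mul]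
        _ = (∑ l ∈ Finset.Icc (-(n : ℤ)) (n : ℤ), lam ^ (2 * l))
              * ((dotProduct x v) ^ 2 + (dotProduct x w) ^ 2) := by
            rw [hmusum]; ring
        _ = (∑ l ∈ Finset.Icc (-(n : ℤ)) (n : ℤ), lam ^ (2 * l))
              * ((∑ i, (x i) ^ 2) * dotProduct v v) := by rw [lagrange x]
        _ = (dotProduct x x
              * ∑ l ∈ Finset.Icc (-(n : ℤ)) (n : ℤ), lam ^ (2 * l)) * dotProduct v v := by
            have : ∑ i, (x i) ^ 2 = dotProduct x x := by
              simp [dotProduct, Fin.sum_univ_two]; ring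
            rw [this]; ring
    exact mul_right_cancel₀ (ne_of_gt hnv) hmulnv
  -- rewrite target
  have hRHS : ∑ l ∈ Finset.Icc (-(n : ℤ)) (n : ℤ), |lam| ^ (2 * l)
      = ∑ l ∈ Finset.Icc (-(n : ℤ)) (n : ℤ), lam ^ (2 * l) :=
    Finset.sum_congr rfl fun l _ => Even.zpow_abs ⟨l, by ring⟩ lam
  rw [hRHS]
  -- reduction of set elements
  have hset : ∀ k : Fin 2 → ℤ,
      (∑ l ∈ Finset.Icc (-(n : ℤ)) (n : ℤ),
          ∑ i, ((B l).mulVec (fun j => ((k j : ℤ) : ℝ)) i) ^ 2)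
        = dotProduct (fun j => ((k j : ℤ) : ℝ)) (fun j => ((k j : ℤ) : ℝ))
            * ∑ l ∈ Finset.Icc (-(n : ℤ)) (n : ℤ), lam ^ (2 * l) := by
    intro k
    simp_rw [hBl]
    exact hfinal _
  -- lower bound
  have hlb : ∀ s ∈ {s : ℝ | ∃ k : Fin 2 → ℤ, k ≠ 0 ∧
      s = ∑ l ∈ Finset.Icc (-(n : ℤ)) (n : ℤ),
            ∑ i, ((B l).mulVec (fun j => ((k j : ℤ) : ℝ)) i) ^ 2},
      (∑ l ∈ Finset.Icc (-(n : ℤ)) (n : ℤ), lam ^ (2 * l)) ≤ s := by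
    rintro s ⟨k, hk, rfl⟩
    rw [hset k]
    have hk01 : k 0 ≠ 0 ∨ k 1 ≠ 0 := by
      by_contra h
      push_neg at h
      apply hk
      funext i
      fin_cases i <;> simp [h.1, h.2]
    have hge : (1 : ℤ) ≤ k 0 * k 0 + k 1 * k 1 := by
      rcases hk01 with h | h <;>
        nlinarith [Int.one_le_abs h, abs_nonneg (k 0), abs_nonneg (k 1),
          abs_mul_abs_self (k 0), abs_mul_abs_self (k 1),
          mul_self_nonneg (k 0), mul_self_nonneg (k 1)]
    have hgeR : (1 : ℝ) ≤ dotProduct (fun j => ((k j : ℤ) : ℝ)) (fun j => ((k j : ℤ) : ℝ)) := by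
      have : dotProduct (fun j => ((k j : ℤ) : ℝ)) (fun j => ((k j : ℤ) : ℝ))
          = ((k 0 * k 0 + k 1 * k 1 : ℤ) : ℝ) := by
        simp [dotProduct, Fin.sum_univ_two]
      rw [this]
      exact_mod_cast hge
    nlinarith [hS, hgeR]
  -- membership
  have hmem : (∑ l ∈ Finset.Icc (-(n : ℤ)) (n : ℤ), lam ^ (2 * l)) ∈
      {s : ℝ | ∃ k : Fin 2 → ℤ, k ≠ 0 ∧
        s = ∑ l ∈ Finset.Icc (-(n : ℤ)) (n : ℤ),
              ∑ i, ((B l).mulVec (fun j => ((k j : ℤ) : ℝ)) i) ^ 2} := by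
    refine ⟨![1, 0], ?_, ?_⟩
    · intro h
      have := congrFun h 0
      simp at this
    · rw [hset ![1, 0]]
      norm_num [dotProduct, Fin.sum_univ_two]
  exact le_antisymm (csInf_le ⟨_, hlb⟩ hmem) (le_csInf ⟨_, hmem⟩ hlb)
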